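/- The subgroup of SL₂(Z) consisting of matrices whose reduction mod 2 is either the identity I or the swap matrix J = [[0,1],[1,0]] is generated by the three matrices [[1,2],[0,1]], [[1,0],[2,1]], and [[0,1],[−1,2]]. -/
import Mathlib
open Matrix ModularGroup

def S₁ : Matrix.SpecialLinearGroup (Fin 2) ℤ := ⟨!![1, 2; 0, 1], by decide⟩
def S₂ : Matrix.SpecialLinearGroup (Fin 2) ℤ := ⟨!![1, 0; 2, 1], by decide⟩
def S₃ : Matrix.SpecialLinearGroup (Fin 2) ℤ := ⟨!![0, 1; -1, 2], by decide⟩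

namespace Stmt18Aux

abbrev SL2 := Matrix.SpecialLinearGroup (Fin 2) ℤ

def Qred (A : SL2) : Prop :=
  (A : Matrix (Fin 2) (Fin 2) ℤ).map (Int.cast : ℤ → ZMod 2) = 1 ∨
  (A : Matrix (Fin 2) (Fin 2) ℤ).map (Int.cast : ℤ → ZMod 2) = !![0, 1; 1, 0]

lemma map_coe_mul (A B : SL2) :
    ((A * B : SL2) : Matrix (Fin 2) (Fin 2) ℤ).map (Int.cast : ℤ → ZMod 2)
    = (A : Matrix (Fin 2) (Fin 2) ℤ).map (Int.cast : ℤ → ZMod 2)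
      * (B : Matrix (Fin 2) (Fin 2) ℤ).map (Int.cast : ℤ → ZMod 2) := by
  rw [Matrix.SpecialLinearGroup.coe_mul]
  exact Matrix.map_mul (f := Int.castRingHom (ZMod 2))

lemma Qred_mul {A B : SL2} (hA : Qred A) (hB : Qred B) : Qred (A * B) := by
  unfold Qred at *
  rw [map_coe_mul]
  rcases hA with hA | hA <;> rcases hB with hB | hB <;> rw [hA, hB] <;>
    [left; right; right; left] <;> decide

lemma Qred_one : Qred (1 : SL2) := by
  left
  ext i j
  fin_cases i <;> fin_cases j <;> simp [Matrix.map_apply]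

lemma Qred_inv {A : SL2} (hA : Qred A) : Qred A⁻¹ := by
  have h1 : Qred (A⁻¹ * A) := by rw [inv_mul_cancel]; exact Qred_one
  have h2 := map_coe_mul A⁻¹ A
  rcases hA with hA | hA
  · rw [hA, mul_one] at h2
    rcases h1 with h1 | h1 <;> rw [h2] at h1
    · left; exact h1
    · right; exact h1
  · -- map A = J, J * J = 1
    rw [hA] at h2
    rcases h1 with h1 | h1
    · right
      have := congrArg (· * !![0,1;1,0]) (h2.symm.trans h1)
      simp only [mul_assoc] at this
      rw [show (!![0,1;1,0] : Matrix (Fin 2) (Fin 2) (ZMod 2)) * !![0,1;1,0] = 1 by decide,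
        mul_one, one_mul] at this
      exact this
    · left
      have := congrArg (· * !![0,1;1,0]) (h2.symm.trans h1)
      simp only [mul_assoc] at this
      rw [show (!![0,1;1,0] : Matrix (Fin 2) (Fin 2) (ZMod 2)) * !![0,1;1,0] = 1 by decide,
        mul_one] at this
      exact this

lemma cast_eq_zero (x : ℤ) : ((x : ZMod 2) = 0) ↔ (2 ∣ x) := by
  rw [show ((2:ℤ)) = ((2:ℕ):ℤ) from rfl]
  exact ZMod.intCast_zmod_eq_zero_iff_dvd x 2

lemma cast_eq_one (x : ℤ) : ((x : ZMod 2) = 1) ↔ ¬ (2 ∣ x) := by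
  constructor
  · intro h hd
    rw [(cast_eq_zero x).mpr hd] at h
    exact absurd h (by decide)
  · intro hd
    have h2 : ∀ z : ZMod 2, z = 0 ∨ z = 1 := by decide
    rcases h2 (x : ZMod 2) with h | h
    · exact absurd ((cast_eq_zero x).mp h) hd
    · exact h

lemma Qred_iff (A : SL2) : Qred A ↔
    ((¬ 2 ∣ (A : Matrix (Fin 2) (Fin 2) ℤ) 0 0) ∧ (2 ∣ (A : Matrix (Fin 2) (Fin 2) ℤ) 0 1) ∧
      (2 ∣ (A : Matrix (Fin 2) (Fin 2) ℤ) 1 0) ∧ (¬ 2 ∣ (A : Matrix (Fin 2) (Fin 2) ℤ) 1 1)) ∨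
    ((2 ∣ (A : Matrix (Fin 2) (Fin 2) ℤ) 0 0) ∧ (¬ 2 ∣ (A : Matrix (Fin 2) (Fin 2) ℤ) 0 1) ∧
      (¬ 2 ∣ (A : Matrix (Fin 2) (Fin 2) ℤ) 1 0) ∧ (2 ∣ (A : Matrix (Fin 2) (Fin 2) ℤ) 1 1)) := by
  unfold Qred
  constructor
  · rintro (h | h) <;> [left; right] <;>
      refine ⟨?_, ?_, ?_, ?_⟩ <;>
      [ (have := congrFun (congrFun h 0) 0);
        (have := congrFun (congrFun h 0) 1);
        (have := congrFun (congrFun h 1) 0);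
        (have := congrFun (congrFun h 1) 1);
        (have := congrFun (congrFun h 0) 0);
        (have := congrFun (congrFun h 0) 1);
        (have := congrFun (congrFun h 1) 0);
        (have := congrFun (congrFun h 1) 1)] <;>
      simp only [Matrix.map_apply, Matrix.one_apply, Matrix.cons_val_zero, Matrix.cons_val_one,
        Matrix.head_cons, Matrix.head_fin_const, Matrix.of_apply, Matrix.cons_val'] at this <;>
      first
        | exact (cast_eq_one _).mp (by simpa using this)
        | exact (cast_eq_zero _).mp (by simpa using this)
  · rintro (⟨h1, h2, h3, h4⟩ | ⟨h1, h2, h3, h4⟩) <;> [left; right] <;>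
      ext i j <;> fin_cases i <;> fin_cases j <;>
      simp only [Matrix.map_apply, Matrix.one_apply, Matrix.cons_val_zero, Matrix.cons_val_one,
        Matrix.head_cons, Matrix.of_apply, Matrix.cons_val'] <;>
      first
        | exact (cast_eq_one _).mpr h1
        | exact (cast_eq_one _).mpr h2
        | exact (cast_eq_one _).mpr h3
        | exact (cast_eq_one _).mpr h4
        | exact (cast_eq_zero _).mpr h1
        | exact (cast_eq_zero _).mpr h2
        | exact (cast_eq_zero _).mpr h3
        | exact (cast_eq_zero _).mpr h4

lemma hS₁T : S₁ = T^(2:ℤ) := by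
  apply Subtype.ext
  rw [ModularGroup.coe_T_zpow]
  rfl

lemma coe_S₁_zpow (k : ℤ) :
    ((S₁^k : SL2) : Matrix (Fin 2) (Fin 2) ℤ) = !![1, 2*k; 0, 1] := by
  rw [hS₁T, ← _root_.zpow_mul, ModularGroup.coe_T_zpow]

def Sm : SL2 := S₃ * S₁

lemma coe_Sm : (Sm : Matrix (Fin 2) (Fin 2) ℤ) = !![0, 1; -1, 0] := by
  show ((S₃ * S₁ : SL2) : Matrix (Fin 2) (Fin 2) ℤ) = _
  rw [Matrix.SpecialLinearGroup.coe_mul]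
  decide

lemma Qred_Sm : Qred Sm := by
  right
  rw [coe_Sm]
  decide

lemma Qred_S₁_zpow (k : ℤ) : Qred (S₁^k) := by
  left
  rw [coe_S₁_zpow]
  have h2k : ((2*k : ℤ) : ZMod 2) = 0 := (cast_eq_zero _).mpr ⟨k, rfl⟩
  ext i j
  fin_cases i <;> fin_cases j <;>
    simp [Matrix.map_apply, Matrix.one_apply, h2k]

def H : Subgroup SL2 := Subgroup.closure {S₁, S₂, S₃}

lemma S₁_mem : S₁ ∈ H := Subgroup.subset_closure (by simp)
lemma S₂_mem : S₂ ∈ H := Subgroup.subset_closure (by simp)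
lemma S₃_mem : S₃ ∈ H := Subgroup.subset_closure (by simp)
lemma Sm_mem : Sm ∈ H := H.mul_mem S₃_mem S₁_mem

lemma exists_reduce_pos (a c : ℤ) (hc : 0 < c) (hpar : ¬ 2 ∣ (a - c)) :
    ∃ m : ℤ, (a + 2*c*m).natAbs < c.natAbs := by
  set q := a / (2*c) with hq
  set r := a % (2*c) with hrdef
  have hb : (0:ℤ) < 2*c := by omega
  have h1 : 2*c*q + r = a := Int.mul_ediv_add_emod a (2*c)
  have hr0 : 0 ≤ r := Int.emod_nonneg a (by omega)
  have hrlt : r < 2*c := Int.emod_lt_of_pos a hb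
  have hx : a + 2*c*(-q) = r := by linear_combination -h1
  have hy : a + 2*c*(-q-1) = r - 2*c := by linear_combination -h1
  have hdvd : (2:ℤ) ∣ (a - r) := ⟨c*q, by linear_combination -h1⟩
  rcases lt_or_ge r c with h | h
  · exact ⟨-q, by omega⟩
  · exact ⟨-q-1, by omega⟩

lemma exists_reduce (a c : ℤ) (hc : c ≠ 0) (hpar : ¬ 2 ∣ (a - c)) :
    ∃ m : ℤ, (a + 2*c*m).natAbs < c.natAbs := by
  rcases lt_or_gt_of_ne hc with h | h
  · obtain ⟨m, hm⟩ := exists_reduce_pos a (-c) (by omega) (by omega)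
    refine ⟨-m, ?_⟩
    have : a + 2*c*(-m) = a + 2*(-c)*m := by ring
    rw [this]
    omega
  · exact exists_reduce_pos a c h hpar

lemma main : ∀ n : ℕ, ∀ A : SL2, ((A : Matrix (Fin 2) (Fin 2) ℤ) 1 0).natAbs = n →
    Qred A → A ∈ H := by
  intro n
  induction n using Nat.strong_induction_on with
  | _ n ih =>
    intro A hn hQ
    obtain ⟨a, ha⟩ : ∃ x, (A : Matrix (Fin 2) (Fin 2) ℤ) 0 0 = x := ⟨_, rfl⟩
    obtain ⟨b, hb⟩ : ∃ x, (A : Matrix (Fin 2) (Fin 2) ℤ) 0 1 = x := ⟨_, rfl⟩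
    obtain ⟨c, hc⟩ : ∃ x, (A : Matrix (Fin 2) (Fin 2) ℤ) 1 0 = x := ⟨_, rfl⟩
    obtain ⟨d, hd⟩ : ∃ x, (A : Matrix (Fin 2) (Fin 2) ℤ) 1 1 = x := ⟨_, rfl⟩
    have hAeta : (A : Matrix (Fin 2) (Fin 2) ℤ) = !![a, b; c, d] := by
      rw [Matrix.eta_fin_two (A : Matrix (Fin 2) (Fin 2) ℤ), ha, hb, hc, hd]
    have hdet : a * d - b * c = 1 := by
      have h := A.2
      rw [Matrix.det_fin_two, ha, hb, hc, hd] at h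
      exact h
    have hQ' := (Qred_iff A).mp hQ
    rw [ha, hb, hc, hd] at hQ'
    by_cases hc0 : c = 0
    · -- base case
      have had : a * d = 1 := by rw [hc0] at hdet; omega
      obtain ⟨k, hk⟩ : 2 ∣ b := by
        rcases hQ' with ⟨_, h2, _, _⟩ | ⟨_, _, h3, _⟩
        · exact h2
        · exact absurd (by omega : (2:ℤ) ∣ c) h3
      rcases Int.mul_eq_one_iff_eq_one_or_neg_one.mp had with ⟨ha1, hd1⟩ | ⟨ha1, hd1⟩
      · have hAS : A = S₁ ^ k := by
          apply Subtype.ext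
          rw [coe_S₁_zpow, hAeta, ha1, hd1, hc0, hk]
        rw [hAS]
        exact H.zpow_mem S₁_mem k
      · have hAS : A = Sm ^ 2 * S₁ ^ (-k) := by
          apply Subtype.ext
          rw [Matrix.SpecialLinearGroup.coe_mul, Matrix.SpecialLinearGroup.coe_pow, coe_Sm,
            coe_S₁_zpow, hAeta, ha1, hd1, hc0, hk, pow_two, Matrix.mul_fin_two,
            Matrix.mul_fin_two]
          norm_num
        rw [hAS]
        exact H.mul_mem (H.pow_mem Sm_mem 2) (H.zpow_mem S₁_mem (-k))
    · -- inductive step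
      have hpar : ¬ (2:ℤ) ∣ (a - c) := by
        rcases hQ' with ⟨h1, _, h3, _⟩ | ⟨h1, _, h3, _⟩ <;> omega
      obtain ⟨m, hm⟩ := exists_reduce a c hc0 hpar
      have hB10 : ((Sm * (S₁ ^ m * A) : SL2) : Matrix (Fin 2) (Fin 2) ℤ) 1 0
          = -(a + 2*c*m) := by
        rw [Matrix.SpecialLinearGroup.coe_mul, Matrix.SpecialLinearGroup.coe_mul, coe_Sm,
          coe_S₁_zpow, hAeta, Matrix.mul_fin_two, Matrix.mul_fin_two]
        simp
        ring
      have hQB : Qred (Sm * (S₁ ^ m * A)) := Qred_mul Qred_Sm (Qred_mul (Qred_S₁_zpow m) hQ)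
      have hBmem : Sm * (S₁ ^ m * A) ∈ H := by
        refine ih _ ?_ _ rfl hQB
        rw [hB10]
        rw [hc] at hn
        omega
      have hAe : A = (S₁ ^ m)⁻¹ * (Sm⁻¹ * (Sm * (S₁ ^ m * A))) := by group
      rw [hAe]
      exact H.mul_mem (H.inv_mem (H.zpow_mem S₁_mem m))
        (H.mul_mem (H.inv_mem Sm_mem) hBmem)

end Stmt18Aux

theorem stmt18 (A : Matrix.SpecialLinearGroup (Fin 2) ℤ) :
    ((A : Matrix (Fin 2) (Fin 2) ℤ).map (Int.cast : ℤ → ZMod 2) = 1 ∨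
      (A : Matrix (Fin 2) (Fin 2) ℤ).map (Int.cast : ℤ → ZMod 2) = !![0, 1; 1, 0]) ↔
    A ∈ Subgroup.closure {S₁, S₂, S₃} := by
  constructor
  · intro h
    exact Stmt18Aux.main _ A rfl h
  · intro h
    refine Subgroup.closure_induction ?_ ?_ ?_ ?_ h
    · rintro x (rfl | rfl | rfl)
      · left; decide
      · left; decide
      · right; decide
    · exact Stmt18Aux.Qred_one
    · intro x y _ _ hx hy; exact Stmt18Aux.Qred_mul hx hy
    · intro x _ hx; exact Stmt18Aux.Qred_inv hx
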